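/- arXiv:1211.6760 — 2 statements merged into one kernel-verified Lean document; each statement's English description precedes it below -/
import Mathlib

section
/- There is an absolute constant C such that for every n ≥ 1, every monotone Boolean function f : {0,1}^n → {0,1}, and every real K > 1, one has Σ_{S ⊆ {0,…,n−1}, |S| > K√n} |f̂(S)|² ≤ C K^{−1}. -/
open Finset

/-- The von Mangoldt function on `ℕ` (with `Λ 0 = 0`). -/
noncomputable def vM : ℕ → ℝ := fun x => ArithmeticFunction.vonMangoldt x

/-- The `j`-th binary digit of `x`. -/
def bit (x j : ℕ) : ℕ := x / 2 ^ j % 2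

/-- The Walsh function `w_S(x) = ∏_{j ∈ S} (1 - 2 x_j)`. -/
noncomputable def walsh (S : Finset ℕ) (x : ℕ) : ℝ := ∏ j ∈ S, (1 - 2 * (bit x j : ℝ))

/-- Fourier–Walsh coefficient `ĝ(S) = 2^{-n} ∑_{x < 2^n} g(x) w_S(x)`. -/
noncomputable def fwCoeff (n : ℕ) (g : ℕ → ℝ) (S : Finset ℕ) : ℝ :=
  ((2 : ℝ) ^ n)⁻¹ * ∑ x ∈ range (2 ^ n), g x * walsh S x

/-- Expectation `E[g] = 2^{-n} ∑_{x < 2^n} g(x)`. -/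
noncomputable def expect (n : ℕ) (g : ℕ → ℝ) : ℝ :=
  ((2 : ℝ) ^ n)⁻¹ * ∑ x ∈ range (2 ^ n), g x

/-- Normalized inner product `⟨g, h⟩ = 2^{-n} ∑_{x < 2^n} g(x) h(x)`. -/
noncomputable def ip (n : ℕ) (g h : ℕ → ℝ) : ℝ :=
  ((2 : ℝ) ^ n)⁻¹ * ∑ x ∈ range (2 ^ n), g x * h x

/-- `f` is a Boolean function (with values `0` or `1`). -/
def IsBoolean (f : ℕ → ℝ) : Prop := ∀ x, f x = 0 ∨ f x = 1

/-- `f` is a monotone Boolean function on `{0,1}^n` (under binary-digit identification). -/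
def IsMonotoneBool (n : ℕ) (f : ℕ → ℝ) : Prop :=
  IsBoolean f ∧
    ∀ x y, x < 2 ^ n → y < 2 ^ n → (∀ j < n, bit x j ≤ bit y j) → f x ≤ f y

/-- The function `Λ̃(y) = ∑_{j < n, y_j = 0} Λ(y + 2^j)`. -/
noncomputable def vMtilde (n : ℕ) (y : ℕ) : ℝ :=
  ∑ j ∈ (range n).filter (fun j => bit y j = 0), vM (y + 2 ^ j)

/-! ## Auxiliary lemmas -/

lemma bit_eq_testBit (x j : ℕ) : bit x j = if x.testBit j then 1 else 0 := by
  rw [Nat.testBit_eq_decide_div_mod_eq, bit]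
  rcases Nat.mod_two_eq_zero_or_one (x / 2 ^ j) with h | h <;> simp [h]

lemma one_sub_two_bit (x j : ℕ) :
    (1 - 2 * (bit x j : ℝ)) = if x.testBit j then -1 else 1 := by
  rw [bit_eq_testBit]; split <;> norm_num

lemma walsh_testBit (S : Finset ℕ) (x : ℕ) :
    walsh S x = ∏ j ∈ S, (if x.testBit j then (-1 : ℝ) else 1) := by
  refine Finset.prod_congr rfl fun j _ => ?_
  rw [one_sub_two_bit]

/-- Sum over the hypercube of a product over bits equals the product of per-bit sums. -/
lemma sum_prod_bits (n : ℕ) (g : ℕ → Bool → ℝ) :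
    ∑ x ∈ range (2 ^ n), ∏ j ∈ range n, g j (x.testBit j)
      = ∏ j ∈ range n, (g j false + g j true) := by
  induction n with
  | zero => simp
  | succ n ih =>
    have hsplit : (2 : ℕ) ^ (n + 1) = 2 ^ n + 2 ^ n := by ring
    rw [hsplit, Finset.range_add, Finset.sum_union, Finset.sum_map]
    · have h1 : ∑ x ∈ range (2 ^ n), ∏ j ∈ range (n + 1), g j (x.testBit j)
          = (∑ x ∈ range (2 ^ n), ∏ j ∈ range n, g j (x.testBit j)) * g n false := by
        rw [Finset.sum_mul]
        refine Finset.sum_congr rfl fun x hx => ?_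
        rw [Finset.prod_range_succ, Nat.testBit_lt_two_pow (Finset.mem_range.mp hx)]
      have h2 : ∑ x ∈ range (2 ^ n),
            ∏ j ∈ range (n + 1), g j ((addLeftEmbedding (2 ^ n) x).testBit j)
          = (∑ x ∈ range (2 ^ n), ∏ j ∈ range n, g j (x.testBit j)) * g n true := by
        rw [Finset.sum_mul]
        refine Finset.sum_congr rfl fun x hx => ?_
        have hx' := Finset.mem_range.mp hx
        have he : addLeftEmbedding (2 ^ n) x = 2 ^ n + x := rfl
        rw [Finset.prod_range_succ, he, Nat.testBit_two_pow_add_eq,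
          Nat.testBit_lt_two_pow hx']
        simp only [Bool.not_false]
        congr 1
        refine Finset.prod_congr rfl fun j hj => ?_
        rw [Nat.testBit_two_pow_add_gt (Finset.mem_range.mp hj)]
      rw [h1, h2, Finset.prod_range_succ, ih]
      ring
    · rw [Finset.disjoint_left]
      intro a ha ha'
      obtain ⟨b, hb, rfl⟩ := Finset.mem_map.mp ha'
      have : 2 ^ n + b < 2 ^ n := Finset.mem_range.mp ha
      omega

lemma walsh_range_form {n : ℕ} {S : Finset ℕ} (hS : S ⊆ range n) (x : ℕ) :
    walsh S x = ∏ j ∈ range n,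
      (if j ∈ S then (if x.testBit j then (-1 : ℝ) else 1) else 1) := by
  rw [Finset.prod_ite_mem, Finset.inter_eq_right.mpr hS, walsh_testBit]

/-- Orthogonality of Walsh functions. -/
lemma walsh_orth {n : ℕ} {S T : Finset ℕ} (hS : S ⊆ range n) (hT : T ⊆ range n) :
    ∑ x ∈ range (2 ^ n), walsh S x * walsh T x = if S = T then (2 : ℝ) ^ n else 0 := by
  have key := sum_prod_bits n (fun j b =>
    (if j ∈ S then (if b then (-1 : ℝ) else 1) else 1) *
      (if j ∈ T then (if b then (-1 : ℝ) else 1) else 1))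
  have hw : ∀ x, walsh S x * walsh T x = ∏ j ∈ range n,
      ((if j ∈ S then (if x.testBit j then (-1 : ℝ) else 1) else 1) *
        (if j ∈ T then (if x.testBit j then (-1 : ℝ) else 1) else 1)) := fun x => by
    rw [walsh_range_form hS, walsh_range_form hT, ← Finset.prod_mul_distrib]
  rw [Finset.sum_congr rfl (fun x _ => hw x), key]
  have hfac : ∀ j ∈ range n,
      ((if j ∈ S then (if (false : Bool) then (-1 : ℝ) else 1) else 1) *
          (if j ∈ T then (if (false : Bool) then (-1 : ℝ) else 1) else 1)
        + (if j ∈ S then (if (true : Bool) then (-1 : ℝ) else 1) else 1) *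
          (if j ∈ T then (if (true : Bool) then (-1 : ℝ) else 1) else 1))
        = (if ((j ∈ S) ↔ (j ∈ T)) then (2 : ℝ) else 0) := by
    intro j _
    by_cases h1 : j ∈ S <;> by_cases h2 : j ∈ T <;> simp [h1, h2] <;> norm_num
  rw [Finset.prod_congr rfl hfac]
  by_cases hST : S = T
  · subst hST
    simp [Finset.prod_const, Finset.card_range]
  · rw [if_neg hST]
    obtain ⟨j, hj⟩ : ∃ j, ¬((j ∈ S) ↔ (j ∈ T)) := by
      by_contra h
      push_neg at h
      exact hST (Finset.ext fun j => h j)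
    have hjr : j ∈ range n := by
      by_cases h1 : j ∈ S
      · exact hS h1
      · exact hT (by tauto)
    exact Finset.prod_eq_zero hjr (by simp [hj])

lemma bits_eq_of_lt {n x y : ℕ} (hx : x < 2 ^ n) (hy : y < 2 ^ n)
    (h : ∀ j < n, x.testBit j = y.testBit j) : x = y := by
  refine Nat.eq_of_testBit_eq fun i => ?_
  rcases lt_or_ge i n with hi | hi
  · exact h i hi
  · have h2 : (2 : ℕ) ^ n ≤ 2 ^ i := Nat.pow_le_pow_right (by norm_num) hi
    rw [Nat.testBit_lt_two_pow (lt_of_lt_of_le hx h2),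
      Nat.testBit_lt_two_pow (lt_of_lt_of_le hy h2)]

/-- Fourier inversion on the hypercube. -/
lemma fw_inversion {n : ℕ} (f : ℕ → ℝ) {x : ℕ} (hx : x < 2 ^ n) :
    ∑ S ∈ (range n).powerset, fwCoeff n f S * walsh S x = f x := by
  have hpos : (0 : ℝ) < (2 : ℝ) ^ n := by positivity
  have key : ∀ y, y < 2 ^ n →
      ∑ S ∈ (range n).powerset, walsh S y * walsh S x
        = if y = x then (2 : ℝ) ^ n else 0 := by
    intro y hy
    have e1 : ∏ j ∈ range n, ((1 - 2 * (bit y j : ℝ)) * (1 - 2 * (bit x j : ℝ)) + 1)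
        = ∑ S ∈ (range n).powerset, walsh S y * walsh S x := by
      rw [Finset.prod_add]
      refine Finset.sum_congr rfl fun t ht => ?_
      rw [Finset.prod_const_one, mul_one, walsh, walsh, ← Finset.prod_mul_distrib]
    rw [← e1]
    have e2 : ∀ j, ((1 - 2 * (bit y j : ℝ)) * (1 - 2 * (bit x j : ℝ)) + 1)
        = if y.testBit j = x.testBit j then 2 else 0 := by
      intro j
      rw [one_sub_two_bit, one_sub_two_bit]
      by_cases h1 : y.testBit j <;> by_cases h2 : x.testBit j <;> simp [h1, h2] <;> norm_num
    rw [Finset.prod_congr rfl fun j _ => e2 j]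
    by_cases hxy : y = x
    · subst hxy
      simp
    · rw [if_neg hxy]
      obtain ⟨j, hjn, hj⟩ : ∃ j, j < n ∧ y.testBit j ≠ x.testBit j := by
        by_contra h
        push_neg at h
        exact hxy (bits_eq_of_lt hy hx h)
      exact Finset.prod_eq_zero (Finset.mem_range.mpr hjn) (by simp [hj])
  have h1 : ∑ S ∈ (range n).powerset, fwCoeff n f S * walsh S x
      = ∑ S ∈ (range n).powerset,
          ((2 : ℝ) ^ n)⁻¹ * ∑ y ∈ range (2 ^ n), f y * (walsh S y * walsh S x) :=
    Finset.sum_congr rfl fun S _ => by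
      rw [fwCoeff, mul_assoc, Finset.sum_mul]
      exact congrArg _ (Finset.sum_congr rfl fun y _ => by ring)
  rw [h1, ← Finset.mul_sum, Finset.sum_comm]
  have h2 : ∀ y ∈ range (2 ^ n),
      ∑ S ∈ (range n).powerset, f y * (walsh S y * walsh S x)
        = if y = x then f y * (2 : ℝ) ^ n else 0 := by
    intro y hy
    rw [← Finset.mul_sum, key y (Finset.mem_range.mp hy)]
    by_cases h : y = x <;> simp [h]
  rw [Finset.sum_congr rfl h2, Finset.sum_ite_eq' (range (2 ^ n)) x
    (fun y => f y * (2 : ℝ) ^ n), if_pos (Finset.mem_range.mpr hx)]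
  field_simp

/-- Parseval identity. -/
lemma parseval (n : ℕ) (f : ℕ → ℝ) :
    ∑ S ∈ (range n).powerset, (fwCoeff n f S) ^ 2 = ip n f f := by
  have step : ∀ S, (fwCoeff n f S) ^ 2
      = ((2 : ℝ) ^ n)⁻¹ * ∑ x ∈ range (2 ^ n), f x * walsh S x * fwCoeff n f S := by
    intro S
    have h0 : (fwCoeff n f S) ^ 2
        = (((2 : ℝ) ^ n)⁻¹ * ∑ x ∈ range (2 ^ n), f x * walsh S x) * fwCoeff n f S := by
      rw [pow_two, fwCoeff]
    rw [h0, mul_assoc, Finset.sum_mul]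
  rw [Finset.sum_congr rfl fun S _ => step S, ← Finset.mul_sum, Finset.sum_comm]
  have h2 : ∀ x ∈ range (2 ^ n),
      ∑ S ∈ (range n).powerset, f x * walsh S x * fwCoeff n f S = f x * f x := by
    intro x hx
    calc ∑ S ∈ (range n).powerset, f x * walsh S x * fwCoeff n f S
        = f x * ∑ S ∈ (range n).powerset, fwCoeff n f S * walsh S x := by
          rw [Finset.mul_sum]
          exact Finset.sum_congr rfl fun S _ => by ring
      _ = f x * f x := by rw [fw_inversion f (Finset.mem_range.mp hx)]
  rw [Finset.sum_congr rfl h2, ip]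

lemma testBit_flip (x i j : ℕ) :
    (x ^^^ 2 ^ j).testBit i = if i = j then !x.testBit i else x.testBit i := by
  rw [Nat.testBit_xor, Nat.testBit_two_pow]
  by_cases h : i = j
  · subst h; simp
  · simp [Ne.symm h, h]

lemma flip_lt {n j x : ℕ} (hj : j < n) (hx : x < 2 ^ n) : x ^^^ 2 ^ j < 2 ^ n :=
  Nat.xor_lt_two_pow hx (Nat.pow_lt_pow_right (by norm_num) hj)

lemma flip_flip' (x j : ℕ) : (x ^^^ 2 ^ j) ^^^ 2 ^ j = x := by
  rw [Nat.xor_assoc, Nat.xor_self, Nat.xor_zero]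

lemma sum_flip {n j : ℕ} (hj : j < n) (F : ℕ → ℝ) :
    ∑ x ∈ range (2 ^ n), F (x ^^^ 2 ^ j) = ∑ x ∈ range (2 ^ n), F x := by
  refine Finset.sum_nbij' (fun x => x ^^^ 2 ^ j) (fun x => x ^^^ 2 ^ j) ?_ ?_ ?_ ?_ ?_
  · intro a ha
    exact Finset.mem_range.mpr (flip_lt hj (Finset.mem_range.mp ha))
  · intro a ha
    exact Finset.mem_range.mpr (flip_lt hj (Finset.mem_range.mp ha))
  · intro a _; exact flip_flip' a j
  · intro a _; exact flip_flip' a j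
  · intro a _; rfl

lemma walsh_flip (S : Finset ℕ) (j x : ℕ) :
    walsh S (x ^^^ 2 ^ j) = (if j ∈ S then -1 else 1) * walsh S x := by
  rw [walsh_testBit, walsh_testBit]
  by_cases hj : j ∈ S
  · rw [if_pos hj, ← Finset.mul_prod_erase _ _ hj,
      ← Finset.mul_prod_erase _ (fun i => if x.testBit i then (-1 : ℝ) else 1) hj]
    have h1 : (if (x ^^^ 2 ^ j).testBit j then (-1 : ℝ) else 1)
        = -(if x.testBit j then (-1 : ℝ) else 1) := by
      rw [testBit_flip, if_pos rfl]
      cases h : x.testBit j <;> simp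
    have h2 : ∏ i ∈ S.erase j, (if (x ^^^ 2 ^ j).testBit i then (-1 : ℝ) else 1)
        = ∏ i ∈ S.erase j, (if x.testBit i then (-1 : ℝ) else 1) := by
      refine Finset.prod_congr rfl fun i hi => ?_
      rw [testBit_flip, if_neg (Finset.ne_of_mem_erase hi)]
    rw [h1, h2]
    ring
  · rw [if_neg hj, one_mul]
    refine Finset.prod_congr rfl fun i hi => ?_
    have hne : (x ^^^ 2 ^ j).testBit i = x.testBit i := by
      rw [testBit_flip, if_neg (show i ≠ j from fun h => hj (h ▸ hi))]
    rw [hne]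

/-- Fourier coefficients of the odd part in direction `j`. -/
lemma fwCoeff_odd {n j : ℕ} (hj : j < n) (f : ℕ → ℝ) (S : Finset ℕ) :
    fwCoeff n (fun x => (f x - f (x ^^^ 2 ^ j)) / 2) S
      = if j ∈ S then fwCoeff n f S else 0 := by
  have hre : ∑ x ∈ range (2 ^ n), f (x ^^^ 2 ^ j) * walsh S x
      = (if j ∈ S then (-1 : ℝ) else 1) * ∑ x ∈ range (2 ^ n), f x * walsh S x := by
    have h0 := sum_flip hj (fun x => f (x ^^^ 2 ^ j) * walsh S x)
    rw [Finset.mul_sum, ← h0]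
    refine Finset.sum_congr rfl fun x _ => ?_
    simp only [flip_flip', walsh_flip S j x]
    ring
  have hsum : ∑ x ∈ range (2 ^ n), ((f x - f (x ^^^ 2 ^ j)) / 2) * walsh S x
      = (1 / 2) * ((∑ x ∈ range (2 ^ n), f x * walsh S x)
          - ∑ x ∈ range (2 ^ n), f (x ^^^ 2 ^ j) * walsh S x) := by
    rw [← Finset.sum_sub_distrib, Finset.mul_sum]
    exact Finset.sum_congr rfl fun x _ => by ring
  rw [fwCoeff, hsum, hre]
  by_cases h : j ∈ S
  · rw [if_pos h, if_pos h, fwCoeff]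
    ring
  · rw [if_neg h, if_neg h]
    ring

lemma ip_self_nonneg (n : ℕ) (g : ℕ → ℝ) : 0 ≤ ip n g g := by
  rw [ip]
  exact mul_nonneg (by positivity) (Finset.sum_nonneg fun x _ => mul_self_nonneg _)

lemma ip_self_le_one {n : ℕ} {f : ℕ → ℝ} (hb : IsBoolean f) : ip n f f ≤ 1 := by
  rw [ip]
  have h1 : ∑ x ∈ range (2 ^ n), f x * f x ≤ (2 : ℝ) ^ n := by
    calc ∑ x ∈ range (2 ^ n), f x * f x ≤ ∑ _x ∈ range (2 ^ n), (1 : ℝ) := by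
          refine Finset.sum_le_sum fun x _ => ?_
          rcases hb x with h | h <;> rw [h] <;> norm_num
      _ = (2 : ℝ) ^ n := by
          rw [Finset.sum_const, Finset.card_range, nsmul_eq_mul, mul_one]
          push_cast
          ring
  have hpos : (0 : ℝ) < (2 : ℝ) ^ n := by positivity
  calc ((2 : ℝ) ^ n)⁻¹ * ∑ x ∈ range (2 ^ n), f x * f x
      ≤ ((2 : ℝ) ^ n)⁻¹ * (2 : ℝ) ^ n := by
        exact mul_le_mul_of_nonneg_left h1 (by positivity)
    _ = 1 := inv_mul_cancel₀ (ne_of_gt hpos)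

/-- For a monotone Boolean function, the energy of the odd part in direction `j`
equals `-(1/2)` times the degree-one coefficient at `j`. -/
lemma ip_odd_eq {n j : ℕ} (hj : j < n) {f : ℕ → ℝ} (hf : IsMonotoneBool n f) :
    ip n (fun x => (f x - f (x ^^^ 2 ^ j)) / 2) (fun x => (f x - f (x ^^^ 2 ^ j)) / 2)
      = -(1 / 2) * fwCoeff n f {j} := by
  have hwj : ∀ x : ℕ, walsh {j} x = 1 - 2 * (bit x j : ℝ) := fun x => by
    rw [walsh, Finset.prod_singleton]
  have key : ∀ x, x < 2 ^ n →
      (f x - f (x ^^^ 2 ^ j)) * (1 - 2 * (bit x j : ℝ))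
        = -(f x - f (x ^^^ 2 ^ j)) ^ 2 := by
    intro x hx
    have hflt : x ^^^ 2 ^ j < 2 ^ n := flip_lt hj hx
    cases h : x.testBit j with
    | false =>
      have hb : (bit x j : ℝ) = 0 := by rw [bit_eq_testBit, h]; simp
      have hmono : f x ≤ f (x ^^^ 2 ^ j) := by
        refine hf.2 x (x ^^^ 2 ^ j) hx hflt fun i hi => ?_
        rcases eq_or_ne i j with rfl | hne
        · rw [bit_eq_testBit, h]
          simp
        · rw [bit_eq_testBit, bit_eq_testBit, testBit_flip, if_neg hne]
      rcases hf.1 x with h1 | h1 <;> rcases hf.1 (x ^^^ 2 ^ j) with h2 | h2 <;>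
        rw [h1, h2, hb] <;> try norm_num
      exact absurd hmono (by rw [h1, h2]; norm_num)
    | true =>
      have hb : (bit x j : ℝ) = 1 := by rw [bit_eq_testBit, h]; simp
      have hmono : f (x ^^^ 2 ^ j) ≤ f x := by
        refine hf.2 (x ^^^ 2 ^ j) x hflt hx fun i hi => ?_
        by_cases heq : i = j
        · subst heq
          rw [bit_eq_testBit, testBit_flip, if_pos rfl, h]
          simp
        · rw [bit_eq_testBit, bit_eq_testBit, testBit_flip, if_neg heq]
      rcases hf.1 x with h1 | h1 <;> rcases hf.1 (x ^^^ 2 ^ j) with h2 | h2 <;>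
        rw [h1, h2, hb] <;> try norm_num
      exact absurd hmono (by rw [h1, h2]; norm_num)
  have hre : ∑ x ∈ range (2 ^ n), f (x ^^^ 2 ^ j) * walsh {j} x
      = - ∑ x ∈ range (2 ^ n), f x * walsh {j} x := by
    have h0 := sum_flip hj (fun x => f (x ^^^ 2 ^ j) * walsh {j} x)
    rw [← h0, ← Finset.sum_neg_distrib]
    refine Finset.sum_congr rfl fun x _ => ?_
    rw [flip_flip', walsh_flip ({j} : Finset ℕ) j x, if_pos (Finset.mem_singleton_self j)]
    ring
  have hA : ∑ x ∈ range (2 ^ n), f x * walsh {j} x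
      = -(1 / 2) * ∑ x ∈ range (2 ^ n), (f x - f (x ^^^ 2 ^ j)) ^ 2 := by
    have h2 : ∑ x ∈ range (2 ^ n), (f x - f (x ^^^ 2 ^ j)) * walsh {j} x
        = - ∑ x ∈ range (2 ^ n), (f x - f (x ^^^ 2 ^ j)) ^ 2 := by
      rw [← Finset.sum_neg_distrib]
      refine Finset.sum_congr rfl fun x hx => ?_
      rw [hwj]
      exact key x (Finset.mem_range.mp hx)
    have h3 : ∑ x ∈ range (2 ^ n), (f x - f (x ^^^ 2 ^ j)) * walsh {j} x
        = 2 * ∑ x ∈ range (2 ^ n), f x * walsh {j} x := by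
      have : ∀ x ∈ range (2 ^ n), (f x - f (x ^^^ 2 ^ j)) * walsh {j} x
          = f x * walsh {j} x - f (x ^^^ 2 ^ j) * walsh {j} x := fun x _ => by ring
      rw [Finset.sum_congr rfl this, Finset.sum_sub_distrib, hre]
      ring
    linarith [h2, h3]
  rw [ip, fwCoeff, hA]
  have h4 : ∀ x ∈ range (2 ^ n),
      ((f x - f (x ^^^ 2 ^ j)) / 2) * ((f x - f (x ^^^ 2 ^ j)) / 2)
        = (1 / 4) * (f x - f (x ^^^ 2 ^ j)) ^ 2 := fun x _ => by ring
  rw [Finset.sum_congr rfl h4, ← Finset.mul_sum]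
  ring

/-- The influence of coordinate `j` as a Fourier weight. -/
lemma influence_eq {n j : ℕ} (hj : j < n) (f : ℕ → ℝ) :
    ∑ S ∈ (range n).powerset, (if j ∈ S then (fwCoeff n f S) ^ 2 else 0)
      = ip n (fun x => (f x - f (x ^^^ 2 ^ j)) / 2)
          (fun x => (f x - f (x ^^^ 2 ^ j)) / 2) := by
  rw [← parseval]
  refine Finset.sum_congr rfl fun S _ => ?_
  rw [fwCoeff_odd hj]
  by_cases h : j ∈ S <;> simp [h]

/-- Total influence bound for monotone Boolean functions. -/
lemma total_influence {n : ℕ} {f : ℕ → ℝ} (hf : IsMonotoneBool n f) :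
    ∑ S ∈ (range n).powerset, (S.card : ℝ) * (fwCoeff n f S) ^ 2
      ≤ Real.sqrt n / 2 := by
  have hcard : ∀ S ∈ (range n).powerset, (S.card : ℝ) * (fwCoeff n f S) ^ 2
      = ∑ j ∈ range n, (if j ∈ S then (fwCoeff n f S) ^ 2 else 0) := by
    intro S hS
    rw [Finset.sum_ite_mem, Finset.inter_eq_right.mpr (Finset.mem_powerset.mp hS),
      Finset.sum_const, nsmul_eq_mul]
  rw [Finset.sum_congr rfl hcard, Finset.sum_comm]
  have hjeq : ∀ j ∈ range n,
      ∑ S ∈ (range n).powerset, (if j ∈ S then (fwCoeff n f S) ^ 2 else 0)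
        = -(1 / 2) * fwCoeff n f {j} := fun j hjr => by
    rw [influence_eq (Finset.mem_range.mp hjr), ip_odd_eq (Finset.mem_range.mp hjr) hf]
  rw [Finset.sum_congr rfl hjeq]
  have hanneg : ∀ j ∈ range n, 0 ≤ -fwCoeff n f {j} := by
    intro j hjr
    have h1 := influence_eq (Finset.mem_range.mp hjr) f
    have h2 := ip_odd_eq (Finset.mem_range.mp hjr) hf
    have h3 := ip_self_nonneg n (fun x => (f x - f (x ^^^ 2 ^ j)) / 2)
    rw [h2] at h3
    linarith
  have hsq : ∑ j ∈ range n, (-fwCoeff n f {j}) ^ 2 ≤ 1 := by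
    have himg : ∑ j ∈ range n, (fwCoeff n f {j}) ^ 2
        = ∑ S ∈ (range n).image (fun j => ({j} : Finset ℕ)), (fwCoeff n f S) ^ 2 := by
      rw [Finset.sum_image (fun i _ k _ h => Finset.singleton_injective h)]
    have hsub : (range n).image (fun j => ({j} : Finset ℕ)) ⊆ (range n).powerset := by
      intro S hS
      obtain ⟨j, hjr, rfl⟩ := Finset.mem_image.mp hS
      exact Finset.mem_powerset.mpr (Finset.singleton_subset_iff.mpr hjr)
    calc ∑ j ∈ range n, (-fwCoeff n f {j}) ^ 2
        = ∑ j ∈ range n, (fwCoeff n f {j}) ^ 2 := by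
          exact Finset.sum_congr rfl fun j _ => by ring
      _ = ∑ S ∈ (range n).image (fun j => ({j} : Finset ℕ)), (fwCoeff n f S) ^ 2 := himg
      _ ≤ ∑ S ∈ (range n).powerset, (fwCoeff n f S) ^ 2 :=
          Finset.sum_le_sum_of_subset_of_nonneg hsub fun S _ _ => sq_nonneg _
      _ = ip n f f := parseval n f
      _ ≤ 1 := ip_self_le_one hf.1
  have hCS : (∑ j ∈ range n, -fwCoeff n f {j}) ^ 2
      ≤ (n : ℝ) * ∑ j ∈ range n, (-fwCoeff n f {j}) ^ 2 := by
    have := sq_sum_le_card_mul_sum_sq (s := range n) (f := fun j => -fwCoeff n f {j})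
    simpa [Finset.card_range] using this
  have hsum_nonneg : 0 ≤ ∑ j ∈ range n, -fwCoeff n f {j} := Finset.sum_nonneg hanneg
  have h5 : (∑ j ∈ range n, -fwCoeff n f {j}) ^ 2 ≤ (n : ℝ) := by
    calc (∑ j ∈ range n, -fwCoeff n f {j}) ^ 2
        ≤ (n : ℝ) * ∑ j ∈ range n, (-fwCoeff n f {j}) ^ 2 := hCS
      _ ≤ (n : ℝ) * 1 := mul_le_mul_of_nonneg_left hsq (Nat.cast_nonneg n)
      _ = (n : ℝ) := mul_one _
  have h6 : ∑ j ∈ range n, -fwCoeff n f {j} ≤ Real.sqrt n := by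
    calc ∑ j ∈ range n, -fwCoeff n f {j}
        = Real.sqrt ((∑ j ∈ range n, -fwCoeff n f {j}) ^ 2) :=
          (Real.sqrt_sq hsum_nonneg).symm
      _ ≤ Real.sqrt n := Real.sqrt_le_sqrt h5
  calc ∑ j ∈ range n, -(1 / 2) * fwCoeff n f {j}
      = (1 / 2) * ∑ j ∈ range n, -fwCoeff n f {j} := by
        rw [Finset.mul_sum]
        exact Finset.sum_congr rfl fun j _ => by ring
    _ ≤ Real.sqrt n / 2 := by linarith

/-- Bshouty–Tamon tail estimate for monotone Boolean functions. -/
theorem monotone_boolean_fourier_tail :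
    ∃ C : ℝ, ∀ n : ℕ, 1 ≤ n → ∀ f : ℕ → ℝ, IsMonotoneBool n f →
      ∀ K : ℝ, 1 < K →
      ∑ S ∈ (range n).powerset.filter (fun S => K * Real.sqrt n < (S.card : ℝ)),
        (fwCoeff n f S) ^ 2 ≤ C * K⁻¹ := by
  refine ⟨1, fun n hn f hf K hK => ?_⟩
  have hK0 : (0 : ℝ) < K := lt_trans one_pos hK
  have hs : (0 : ℝ) < Real.sqrt n := Real.sqrt_pos.mpr (by exact_mod_cast hn)
  have hKs : (0 : ℝ) < K * Real.sqrt n := mul_pos hK0 hs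
  set T := (range n).powerset.filter (fun S => K * Real.sqrt n < (S.card : ℝ)) with hT
  have hstep : K * Real.sqrt n * ∑ S ∈ T, (fwCoeff n f S) ^ 2
      ≤ ∑ S ∈ T, (S.card : ℝ) * (fwCoeff n f S) ^ 2 := by
    rw [Finset.mul_sum]
    refine Finset.sum_le_sum fun S hS => ?_
    have hSc := (Finset.mem_filter.mp hS).2
    exact mul_le_mul_of_nonneg_right hSc.le (sq_nonneg _)
  have hsub : ∑ S ∈ T, (S.card : ℝ) * (fwCoeff n f S) ^ 2
      ≤ ∑ S ∈ (range n).powerset, (S.card : ℝ) * (fwCoeff n f S) ^ 2 :=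
    Finset.sum_le_sum_of_subset_of_nonneg (Finset.filter_subset _ _)
      fun S _ _ => mul_nonneg (Nat.cast_nonneg _) (sq_nonneg _)
  have htot := total_influence hf
  have hmain : ∑ S ∈ T, (fwCoeff n f S) ^ 2 ≤ Real.sqrt n / 2 / (K * Real.sqrt n) := by
    rw [le_div_iff₀ hKs]
    calc (∑ S ∈ T, (fwCoeff n f S) ^ 2) * (K * Real.sqrt n)
        = K * Real.sqrt n * ∑ S ∈ T, (fwCoeff n f S) ^ 2 := by ring
      _ ≤ Real.sqrt n / 2 := le_trans hstep (le_trans hsub htot)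
  have heq : Real.sqrt n / 2 / (K * Real.sqrt n) = (1 / 2) * K⁻¹ := by
    field_simp
  have hKinv : (0 : ℝ) ≤ K⁻¹ := inv_nonneg.mpr hK0.le
  calc ∑ S ∈ T, (fwCoeff n f S) ^ 2 ≤ Real.sqrt n / 2 / (K * Real.sqrt n) := hmain
    _ = (1 / 2) * K⁻¹ := heq
    _ ≤ 1 * K⁻¹ := by linarith
end

section
/- Let f : {0,1}^n → {0,1} be a monotone Boolean function. Then ⟨Λ̃, f⟩ = 2^{−n} Σ_{0≤x<2^n} Λ(x) Σ_{j<n : x_j = 1} f(x − 2^j) ≤ 2^{−n} Σ_{0≤x<2^n} Λ(x) (Σ_{j<n} x_j) f(x) ≤ n · ⟨Λ, f⟩. -/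
open Finset

lemma bit_le_one (x j : ℕ) : bit x j ≤ 1 := by
  have : x / 2 ^ j % 2 < 2 := Nat.mod_lt _ (by norm_num)
  simpa [bit] using Nat.lt_succ_iff.mp this

lemma mod_lt_of_bit_zero {x j : ℕ} (h : bit x j = 0) : x % 2 ^ (j + 1) < 2 ^ j := by
  have hm : x % (2 ^ j * 2) = x % 2 ^ j + 2 ^ j * (x / 2 ^ j % 2) := Nat.mod_mul
  simp only [bit] at h
  rw [pow_succ, hm, h]
  simpa using Nat.mod_lt x (Nat.pow_pos (a := 2) (n := j) (by norm_num))

lemma hi_eq {x j : ℕ} (h : bit x j = 0) : (x + 2 ^ j) / 2 ^ (j + 1) = x / 2 ^ (j + 1) := by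
  have hp : 0 < 2 ^ (j + 1) := Nat.pow_pos (a := 2) (by norm_num)
  have hd : 2 ^ (j + 1) * (x / 2 ^ (j + 1)) + x % 2 ^ (j + 1) = x := Nat.div_add_mod x _
  have hr : x % 2 ^ (j + 1) + 2 ^ j < 2 ^ (j + 1) := by
    have := mod_lt_of_bit_zero h
    have : (2 : ℕ) ^ (j + 1) = 2 ^ j + 2 ^ j := by rw [pow_succ]; ring
    omega
  calc (x + 2 ^ j) / 2 ^ (j + 1)
      = (2 ^ (j + 1) * (x / 2 ^ (j + 1)) + (x % 2 ^ (j + 1) + 2 ^ j)) / 2 ^ (j + 1) := by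
        rw [← add_assoc, hd]
    _ = x / 2 ^ (j + 1) + (x % 2 ^ (j + 1) + 2 ^ j) / 2 ^ (j + 1) := Nat.mul_add_div hp _ _
    _ = x / 2 ^ (j + 1) := by rw [Nat.div_eq_of_lt hr, add_zero]

lemma bit_add_self {x j : ℕ} (h : bit x j = 0) : bit (x + 2 ^ j) j = 1 := by
  have hd : (x + 2 ^ j) / 2 ^ j = x / 2 ^ j + 1 :=
    Nat.add_div_right x (Nat.pow_pos (a := 2) (by norm_num))
  simp only [bit] at *
  omega

lemma bit_add_lt {j k : ℕ} (x : ℕ) (hk : k < j) : bit (x + 2 ^ j) k = bit x k := by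
  have e : x + 2 ^ j = x + 2 ^ (j - k) * 2 ^ k := by rw [← pow_add, Nat.sub_add_cancel hk.le]
  have hd : (x + 2 ^ (j - k) * 2 ^ k) / 2 ^ k = x / 2 ^ k + 2 ^ (j - k) :=
    Nat.add_mul_div_right x _ (Nat.pow_pos (a := 2) (by norm_num))
  have he : (2 : ℕ) ^ (j - k) = 2 * 2 ^ (j - k - 1) := by
    rw [← pow_succ']; congr 1; omega
  simp only [bit, e, hd]
  omega

lemma bit_add_gt {x j k : ℕ} (h : bit x j = 0) (hk : j < k) : bit (x + 2 ^ j) k = bit x k := by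
  have e : (2 : ℕ) ^ k = 2 ^ (j + 1) * 2 ^ (k - j - 1) := by rw [← pow_add]; congr 1; omega
  simp only [bit, e, ← Nat.div_div_eq_div_mul, hi_eq h]

lemma add_pow_lt {x j n : ℕ} (h : bit x j = 0) (hx : x < 2 ^ n) (hj : j < n) :
    x + 2 ^ j < 2 ^ n := by
  have e : (2 : ℕ) ^ n = 2 ^ (j + 1) * 2 ^ (n - j - 1) := by rw [← pow_add]; congr 1; omega
  have hp : 0 < 2 ^ n := Nat.pow_pos (a := 2) (by norm_num)
  rw [← Nat.div_eq_zero_iff_lt hp] at hx ⊢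
  rw [e, ← Nat.div_div_eq_div_mul, hi_eq h, Nat.div_div_eq_div_mul, ← e]
  exact hx

lemma pow_le_of_bit_one {x j : ℕ} (h : bit x j = 1) : 2 ^ j ≤ x := by
  by_contra h'
  push_neg at h'
  rw [bit, Nat.div_eq_of_lt h'] at h
  simp at h

lemma bit_sub_self {x j : ℕ} (h : bit x j = 1) : bit (x - 2 ^ j) j = 0 := by
  have hp : 0 < 2 ^ j := Nat.pow_pos (a := 2) (by norm_num)
  have hd : 2 ^ j * (x / 2 ^ j) + x % 2 ^ j = x := Nat.div_add_mod x _
  have hq : 1 ≤ x / 2 ^ j := by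
    rcases Nat.eq_zero_or_pos (x / 2 ^ j) with h0 | h0
    · rw [bit, h0] at h; simp at h
    · exact h0
  have h3 : 2 ^ j * (x / 2 ^ j) = 2 ^ j * (x / 2 ^ j - 1) + 2 ^ j := by
    conv_lhs => rw [show x / 2 ^ j = (x / 2 ^ j - 1) + 1 by omega]
    rw [Nat.mul_succ]
  have h4 : x - 2 ^ j = 2 ^ j * (x / 2 ^ j - 1) + x % 2 ^ j := by omega
  have h5 : (x - 2 ^ j) / 2 ^ j = x / 2 ^ j - 1 + x % 2 ^ j / 2 ^ j := by
    rw [h4, Nat.mul_add_div hp]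
  have h6 : x % 2 ^ j / 2 ^ j = 0 := Nat.div_eq_of_lt (Nat.mod_lt x hp)
  have hb : x / 2 ^ j % 2 = 1 := h
  show (x - 2 ^ j) / 2 ^ j % 2 = 0
  rw [h5, h6]
  omega


lemma bit_sub_le {x j : ℕ} (hj1 : bit x j = 1) (k : ℕ) : bit (x - 2 ^ j) k ≤ bit x k := by
  have hle := pow_le_of_bit_one hj1
  have hx : x = (x - 2 ^ j) + 2 ^ j := by omega
  have hy0 : bit (x - 2 ^ j) j = 0 := bit_sub_self hj1
  rcases lt_trichotomy k j with h | h | h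
  · conv_rhs => rw [hx]
    rw [bit_add_lt _ h]
  · subst h; rw [hy0]; exact Nat.zero_le _
  · conv_rhs => rw [hx]
    rw [bit_add_gt hy0 h]

lemma sum_bits_eq (n x : ℕ) :
    ∑ j ∈ range n, (bit x j : ℝ) = (((range n).filter (fun j => bit x j = 1)).card : ℝ) := by
  rw [← Finset.sum_boole]
  apply Finset.sum_congr rfl
  intro j _
  by_cases hb : bit x j = 1
  · simp [hb]
  · have h0 : bit x j = 0 := by have := bit_le_one x j; omega
    simp [hb, h0]


/-- the basic monotonicity inequality `⟨Λ̃, f⟩ ≤ n ⟨Λ, f⟩`. -/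
theorem vMtilde_inner_le (n : ℕ) (f : ℕ → ℝ) (hf : IsMonotoneBool n f) :
    ip n (vMtilde n) f =
      ((2 : ℝ) ^ n)⁻¹ * ∑ x ∈ range (2 ^ n),
        vM x * ∑ j ∈ (range n).filter (fun j => bit x j = 1), f (x - 2 ^ j) ∧
    ((2 : ℝ) ^ n)⁻¹ * ∑ x ∈ range (2 ^ n),
        vM x * ∑ j ∈ (range n).filter (fun j => bit x j = 1), f (x - 2 ^ j) ≤
      ((2 : ℝ) ^ n)⁻¹ * ∑ x ∈ range (2 ^ n),
        vM x * (∑ j ∈ range n, (bit x j : ℝ)) * f x ∧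
    ((2 : ℝ) ^ n)⁻¹ * ∑ x ∈ range (2 ^ n),
        vM x * (∑ j ∈ range n, (bit x j : ℝ)) * f x ≤ (n : ℝ) * ip n vM f := by
  have hinv : (0 : ℝ) ≤ ((2 : ℝ) ^ n)⁻¹ := by positivity
  have hvm : ∀ x : ℕ, 0 ≤ vM x := fun x => ArithmeticFunction.vonMangoldt_nonneg
  have hf0 : ∀ x, 0 ≤ f x := fun x => by rcases hf.1 x with h | h <;> simp [h]
  refine ⟨?_, ?_, ?_⟩
  · -- Part 1: reindexing
    rw [ip]
    congr 1
    calc ∑ y ∈ range (2 ^ n), vMtilde n y * f y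
        = ∑ y ∈ range (2 ^ n),
            ∑ j ∈ (range n).filter (fun j => bit y j = 0), vM (y + 2 ^ j) * f y := by
          simp only [vMtilde, Finset.sum_mul]
      _ = ∑ x ∈ range (2 ^ n),
            ∑ j ∈ (range n).filter (fun j => bit x j = 1), vM x * f (x - 2 ^ j) := by
          rw [Finset.sum_sigma' (range (2 ^ n)) _ (fun y j => vM (y + 2 ^ j) * f y),
            Finset.sum_sigma' (range (2 ^ n)) _ (fun x j => vM x * f (x - 2 ^ j))]
          refine Finset.sum_nbij' (fun p => ⟨p.1 + 2 ^ p.2, p.2⟩)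
            (fun p => ⟨p.1 - 2 ^ p.2, p.2⟩) ?_ ?_ ?_ ?_ ?_
          · rintro ⟨y, j⟩ hm
            simp only [Finset.mem_sigma, Finset.mem_filter, Finset.mem_range] at hm ⊢
            exact ⟨add_pow_lt hm.2.2 hm.1 hm.2.1, hm.2.1, bit_add_self hm.2.2⟩
          · rintro ⟨x, j⟩ hm
            simp only [Finset.mem_sigma, Finset.mem_filter, Finset.mem_range] at hm ⊢
            exact ⟨lt_of_le_of_lt (Nat.sub_le x _) hm.1, hm.2.1, bit_sub_self hm.2.2⟩
          · rintro ⟨y, j⟩ hm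
            simp only [Nat.add_sub_cancel]
          · rintro ⟨x, j⟩ hm
            simp only [Finset.mem_sigma, Finset.mem_filter, Finset.mem_range] at hm
            have := pow_le_of_bit_one hm.2.2
            simp only []
            congr 1
            omega
          · rintro ⟨y, j⟩ hm
            simp only [Nat.add_sub_cancel]
      _ = ∑ x ∈ range (2 ^ n),
            vM x * ∑ j ∈ (range n).filter (fun j => bit x j = 1), f (x - 2 ^ j) := by
          simp only [Finset.mul_sum]
  · -- Part 2: monotonicity termwise
    apply mul_le_mul_of_nonneg_left _ hinv
    apply Finset.sum_le_sum
    intro x hx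
    rw [Finset.mem_range] at hx
    rw [mul_assoc]
    apply mul_le_mul_of_nonneg_left _ (hvm x)
    calc ∑ j ∈ (range n).filter (fun j => bit x j = 1), f (x - 2 ^ j)
        ≤ ∑ j ∈ (range n).filter (fun j => bit x j = 1), f x := by
          apply Finset.sum_le_sum
          intro j hj
          rw [Finset.mem_filter, Finset.mem_range] at hj
          exact hf.2 (x - 2 ^ j) x (lt_of_le_of_lt (Nat.sub_le x _) hx) hx
            (fun k _ => bit_sub_le hj.2 k)
      _ = (∑ j ∈ range n, (bit x j : ℝ)) * f x := by
          rw [Finset.sum_const, nsmul_eq_mul, sum_bits_eq]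
  · -- Part 3: trivial bound
    have hrw : (n : ℝ) * ip n vM f =
        ((2 : ℝ) ^ n)⁻¹ * ∑ x ∈ range (2 ^ n), (n : ℝ) * (vM x * f x) := by
      simp only [ip, Finset.mul_sum]
      apply Finset.sum_congr rfl
      intros
      ring
    rw [hrw]
    apply mul_le_mul_of_nonneg_left _ hinv
    apply Finset.sum_le_sum
    intro x hx
    have hb : ∑ j ∈ range n, (bit x j : ℝ) ≤ (n : ℝ) := by
      calc ∑ j ∈ range n, (bit x j : ℝ) ≤ ∑ _j ∈ range n, (1 : ℝ) :=
            Finset.sum_le_sum (fun j _ => by exact_mod_cast bit_le_one x j)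
        _ = n := by rw [Finset.sum_const, card_range, nsmul_eq_mul, mul_one]
    have h1 : vM x * (∑ j ∈ range n, (bit x j : ℝ)) ≤ vM x * n :=
      mul_le_mul_of_nonneg_left hb (hvm x)
    have h2 := mul_le_mul_of_nonneg_right h1 (hf0 x)
    calc vM x * (∑ j ∈ range n, (bit x j : ℝ)) * f x ≤ vM x * n * f x := h2
      _ = (n : ℝ) * (vM x * f x) := by ring
end
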